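/- In the power series ring K[[t]] with K = F_q(θ), let log_{C,z} = ∑_{k≥0} (z^k/ℓ_k) τ^k and log^{(1)}_{C,z} = ∑_{k≥0} (k z^{k−1}/ℓ_k) τ^k be twisted power series in the variable τ over K[z], where τ z = z τ and τ a = a^q τ for a ∈ K. Then one has the identity log^{(1)}_{C,z}·(zτ + θ) − θ·log^{(1)}_{C,z} = −log_{C,z}·τ. -/

import Mathlib

/-- The identity `log^{(1)}_{C,z}·(zτ + θ) − θ·log^{(1)}_{C,z} = −log_{C,z}·τ` in the
twisted power series ring over `K[z]` (`τ x = x^q τ` for `x ∈ K = F_q(θ)`, `τ z = z τ`),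
stated coefficientwise: for every `m ≥ 1`, the coefficient of `τ^m` (an element of
`K[z]`, with `z = Polynomial.X` and `θ = RatFunc.X`) of the left side, namely
`(m−1) z^{m−1}/ℓ_{m−1} + m z^{m−1} θ^{q^m}/ℓ_m − m z^{m−1} θ/ℓ_m`,
equals that of the right side, `−z^{m−1}/ℓ_{m−1}`; the coefficient of `τ^0` of both
sides is `0`. Here `ℓ_i = ∏_{k=1}^{i}(θ − θ^{q^k})`. -/
theorem stmt8 (F : Type*) [Field F] [Fintype F] (q : ℕ) (hq : q = Fintype.card F)
    (ℓ : ℕ → RatFunc F)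
    (hℓ : ∀ i, ℓ i = ∏ k ∈ Finset.Icc 1 i, (RatFunc.X - RatFunc.X ^ q ^ k)) :
    ∀ m : ℕ, 1 ≤ m →
      Polynomial.C (((m - 1 : ℕ) : RatFunc F) / ℓ (m - 1)) * Polynomial.X ^ (m - 1)
        + Polynomial.C ((m : RatFunc F) * RatFunc.X ^ q ^ m / ℓ m) * Polynomial.X ^ (m - 1)
        - Polynomial.C ((m : RatFunc F) * RatFunc.X / ℓ m) * Polynomial.X ^ (m - 1)
      = -(Polynomial.C ((ℓ (m - 1))⁻¹) * Polynomial.X ^ (m - 1)) := by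
  have hq2 : 2 ≤ q := hq ▸ Fintype.one_lt_card
  have hfac : ∀ k : ℕ, 1 ≤ k → (RatFunc.X : RatFunc F) - RatFunc.X ^ q ^ k ≠ 0 := by
    intro k hk
    rw [sub_ne_zero]
    intro h
    have h2 : (Polynomial.X : Polynomial F) = Polynomial.X ^ q ^ k := by
      apply RatFunc.algebraMap_injective F
      simpa [RatFunc.algebraMap_X] using h
    have := congrArg Polynomial.natDegree h2
    simp [Polynomial.natDegree_X_pow] at this
    have : 2 ≤ q ^ k := le_trans hq2 (Nat.le_self_pow (by omega) q)
    omega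
  have hℓnz : ∀ i, ℓ i ≠ 0 := by
    intro i
    rw [hℓ]
    exact Finset.prod_ne_zero_iff.mpr fun k hk => hfac k (Finset.mem_Icc.mp hk).1
  intro m hm
  obtain ⟨n, rfl⟩ : ∃ n, m = n + 1 := ⟨m - 1, (Nat.succ_pred_eq_of_pos hm).symm⟩
  simp only [Nat.add_sub_cancel]
  have hstep : ℓ (n + 1) = ℓ n * (RatFunc.X - RatFunc.X ^ q ^ (n + 1)) := by
    rw [hℓ, hℓ, Finset.prod_Icc_succ_top (by omega)]
  have key : ((n : ℕ) : RatFunc F) / ℓ n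
      + ((n + 1 : ℕ) : RatFunc F) * RatFunc.X ^ q ^ (n + 1) / ℓ (n + 1)
      - ((n + 1 : ℕ) : RatFunc F) * RatFunc.X / ℓ (n + 1) = -(ℓ n)⁻¹ := by
    rw [hstep]
    field_simp [hℓnz n, hfac (n + 1) (by omega)]
    push_cast
    ring
  rw [← add_mul, ← sub_mul, ← Polynomial.C_add, ← Polynomial.C_sub, key, Polynomial.C_neg,
    neg_mul]
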